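/- Let $\alpha,\beta\in\mathbb{R}$ with $\alpha\geq 0$, $\alpha+\beta<1$, and let $u\in H^1_{\alpha,\beta,0}(0,1)$ (i.e., $u$ locally absolutely continuous, $\int_0^1 x^{\alpha+\beta}|u'|^2dx<\infty$, $u(0)=u(1)=0$). Then $\lim_{x\to 0^+} x^{\delta}|u(x)| = 0$ for every $\delta\geq (\alpha+\beta-1)/2$. -/

import Mathlib

open MeasureTheory Set Filter Topology

lemma key_est (σ : ℝ) (hσ : σ < 1) (u u' : ℝ → ℝ)
    (hderiv : ∀ x ∈ Ioo (0:ℝ) 1, HasDerivAt u (u' x) x)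
    (hu'm : AEStronglyMeasurable u' (volume.restrict (Ioo (0:ℝ) 1)))
    (hint : IntegrableOn (fun t => t ^ σ * u' t ^ 2) (Ioo 0 1))
    (hu0 : Tendsto u (𝓝[>] (0:ℝ)) (𝓝 0))
    (lam : ℝ) (hlam : 0 < lam) (x : ℝ) (hx : x ∈ Ioo (0:ℝ) 1) :
    |u x| ≤ lam * x ^ (1 - σ) / (2 * (1 - σ))
        + (∫ t in Ioo (0:ℝ) x, t ^ σ * u' t ^ 2) / (2 * lam) := by
  obtain ⟨hx0, hx1⟩ := hx
  set h : ℝ → ℝ := fun t => (lam * t ^ (-σ) + lam⁻¹ * (t ^ σ * u' t ^ 2)) / 2 with hh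
  -- pointwise bound
  have hpt : ∀ t ∈ Ioo (0:ℝ) 1, |u' t| ≤ h t := by
    intro t ht
    have ht0 : (0:ℝ) < t := ht.1
    have hA : 0 ≤ lam * t ^ (-σ) := by positivity
    have hB : 0 ≤ lam⁻¹ * (t ^ σ * u' t ^ 2) := by positivity
    have hAB : (lam * t ^ (-σ)) * (lam⁻¹ * (t ^ σ * u' t ^ 2)) = |u' t| ^ 2 := by
      have h1 : t ^ (-σ) * t ^ σ = 1 := by
        rw [← Real.rpow_add ht0]; simp
      have : (lam * t ^ (-σ)) * (lam⁻¹ * (t ^ σ * u' t ^ 2))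
          = (lam * lam⁻¹) * ((t ^ (-σ) * t ^ σ) * u' t ^ 2) := by ring
      rw [this, h1, mul_inv_cancel₀ hlam.ne', sq_abs]; ring
    have habs : 0 ≤ |u' t| := abs_nonneg _
    rw [hh]
    nlinarith [sq_nonneg (lam * t ^ (-σ) - lam⁻¹ * (t ^ σ * u' t ^ 2)),
      sq_nonneg (lam * t ^ (-σ) + lam⁻¹ * (t ^ σ * u' t ^ 2) - 2 * |u' t|)]
  -- integrability of h on Ioo 0 1
  have hrpow_int : IntegrableOn (fun t : ℝ => t ^ (-σ)) (Ioo 0 1) :=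
    (intervalIntegral.integrableOn_Ioo_rpow_iff zero_lt_one).2 (by linarith)
  have hhint : IntegrableOn h (Ioo 0 1) := by
    exact (((hrpow_int.const_mul lam).add (hint.const_mul lam⁻¹)).div_const 2)
  have hhnonneg : ∀ t ∈ Ioo (0:ℝ) 1, 0 ≤ h t := by
    intro t ht
    have ht0 : (0:ℝ) < t := ht.1
    rw [hh]; positivity
  have hhint' : IntegrableOn h (Ioo 0 x) := hhint.mono_set (Ioo_subset_Ioo le_rfl hx1.le)
  -- FTC bound for each y ∈ Ioo 0 x
  have hbd : ∀ y ∈ Ioo (0:ℝ) x, |u x| ≤ |u y| + ∫ t in Ioo (0:ℝ) x, h t := by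
    intro y hy
    have hy0 : (0:ℝ) < y := hy.1
    have hyx : y < x := hy.2
    have hsub : Icc y x ⊆ Ioo 0 1 := fun t ht => ⟨lt_of_lt_of_le hy0 ht.1, lt_of_le_of_lt ht.2 hx1⟩
    have hsub' : Ioc y x ⊆ Ioo (0:ℝ) 1 := fun t ht => hsub ⟨ht.1.le, ht.2⟩
    have hu'int : IntegrableOn u' (Ioc y x) := by
      refine Integrable.mono' (hhint.mono_set hsub') (hu'm.mono_set hsub')
        ((ae_restrict_iff' measurableSet_Ioc).2 (ae_of_all _ fun t ht => ?_))
      exact (hpt t (hsub' ht))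
    have hii : IntervalIntegrable u' volume y x :=
      (intervalIntegrable_iff_integrableOn_Ioc_of_le hyx.le).2 hu'int
    have hftc : ∫ t in y..x, u' t = u x - u y :=
      intervalIntegral.integral_eq_sub_of_hasDerivAt
        (fun t ht => hderiv t (hsub (by rwa [uIcc_of_le hyx.le] at ht))) hii
    have h1 : |u x| ≤ |u y| + |∫ t in y..x, u' t| := by
      have : u x = u y + (u x - u y) := by ring
      calc |u x| = |u y + (u x - u y)| := by rw [← this]
        _ ≤ |u y| + |u x - u y| := abs_add_le _ _
        _ = |u y| + |∫ t in y..x, u' t| := by rw [hftc]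
    have hhii : IntervalIntegrable h volume y x :=
      (intervalIntegrable_iff_integrableOn_Ioc_of_le hyx.le).2 (hhint.mono_set hsub')
    have h2 : |∫ t in y..x, u' t| ≤ ∫ t in y..x, h t := by
      refine (intervalIntegral.abs_integral_le_integral_abs hyx.le).trans ?_
      refine intervalIntegral.integral_mono_on hyx.le hii.abs hhii ?_
      exact fun t ht => hpt t (hsub ht)
    have h3 : ∫ t in y..x, h t ≤ ∫ t in Ioo (0:ℝ) x, h t := by
      rw [intervalIntegral.integral_of_le hyx.le, integral_Ioc_eq_integral_Ioo]
      refine setIntegral_mono_set hhint' ?_ (HasSubset.Subset.eventuallyLE ?_)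
      · exact (ae_restrict_iff' measurableSet_Ioo).2 (ae_of_all _ fun t ht =>
          hhnonneg t ⟨ht.1, ht.2.trans hx1⟩)
      · exact Ioo_subset_Ioo hy0.le le_rfl
    linarith
  -- take y → 0+
  have hlim : Tendsto (fun y => |u y| + ∫ t in Ioo (0:ℝ) x, h t) (𝓝[>] (0:ℝ))
      (𝓝 (∫ t in Ioo (0:ℝ) x, h t)) := by
    have : Tendsto (fun y => |u y|) (𝓝[>] (0:ℝ)) (𝓝 0) := by
      simpa using hu0.abs
    simpa using this.add tendsto_const_nhds
  have hmain : |u x| ≤ ∫ t in Ioo (0:ℝ) x, h t := by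
    refine ge_of_tendsto hlim ?_
    filter_upwards [Ioo_mem_nhdsGT_of_mem ⟨le_refl 0, hx0⟩] with y hy
    exact hbd y hy
  -- compute the integral
  have hrint : IntegrableOn (fun t : ℝ => t ^ (-σ)) (Ioo 0 x) :=
    (intervalIntegral.integrableOn_Ioo_rpow_iff hx0).2 (by linarith)
  have hfint : IntegrableOn (fun t => t ^ σ * u' t ^ 2) (Ioo 0 x) :=
    hint.mono_set (Ioo_subset_Ioo le_rfl hx1.le)
  have hval : ∫ t in Ioo (0:ℝ) x, t ^ (-σ) = x ^ (1 - σ) / (1 - σ) := by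
    have := integral_rpow (a := 0) (b := x) (r := -σ) (Or.inl (by linarith))
    rw [intervalIntegral.integral_of_le hx0.le, integral_Ioc_eq_integral_Ioo] at this
    rw [this, Real.zero_rpow (by linarith : -σ + 1 ≠ 0)]
    norm_num
    rw [show -σ + 1 = 1 - σ by ring]
  have hsplit : ∫ t in Ioo (0:ℝ) x, h t
      = lam * x ^ (1 - σ) / (2 * (1 - σ))
        + (∫ t in Ioo (0:ℝ) x, t ^ σ * u' t ^ 2) / (2 * lam) := by
    rw [hh]
    simp only [div_eq_mul_inv]
    rw [integral_mul_const, integral_add ((hrint.const_mul lam)) (hfint.const_mul lam⁻¹),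
      integral_const_mul, integral_const_mul, hval]
    have h1σ : (1:ℝ) - σ ≠ 0 := by linarith
    field_simp
  rw [← hsplit]
  exact hmain

theorem stmt3 (α β : ℝ) (hα : 0 ≤ α) (hαβ : α + β < 1) (u u' : ℝ → ℝ)
    (hderiv : ∀ x ∈ Ioo (0:ℝ) 1, HasDerivAt u (u' x) x)
    (hu : IntegrableOn (fun x => u x ^ 2 * x ^ β) (Ioo 0 1))
    (hint : IntegrableOn (fun x => x ^ (α + β) * u' x ^ 2) (Ioo 0 1))
    (hu0 : Tendsto u (𝓝[>] (0:ℝ)) (𝓝 0))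
    (hu1 : Tendsto u (𝓝[<] (1:ℝ)) (𝓝 0)) :
    ∀ δ : ℝ, (α + β - 1)/2 ≤ δ →
      Tendsto (fun x => x ^ δ * |u x|) (𝓝[>] (0:ℝ)) (𝓝 0) := by
  intro δ hδ
  have hσ1 : α + β < 1 := hαβ
  have hu'm : AEStronglyMeasurable u' (volume.restrict (Ioo (0:ℝ) 1)) := by
    have hd : ∀ x ∈ Ioo (0:ℝ) 1, deriv u x = u' x := fun x hx => (hderiv x hx).deriv
    exact (measurable_deriv u).aestronglyMeasurable.congr
      ((ae_restrict_iff' measurableSet_Ioo).2 (ae_of_all _ hd))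
  have hAnonneg : ∀ x : ℝ, 0 ≤ x → 0 ≤ ∫ t in Ioo (0:ℝ) x, t ^ (α+β) * u' t ^ 2 :=
    fun x _ => setIntegral_nonneg measurableSet_Ioo
      (fun t ht => mul_nonneg (Real.rpow_nonneg ht.1.le _) (sq_nonneg _))
  -- the key inequality
  have key : ∀ ε : ℝ, 0 < ε → ∀ x, x ∈ Ioo (0:ℝ) 1 →
      x ^ δ * |u x| ≤ ε / (2*(1-(α+β)))
        + (∫ t in Ioo (0:ℝ) x, t ^ (α+β) * u' t ^ 2) / (2*ε) := by
    intro ε hε x hx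
    obtain ⟨hx0, hx1⟩ := hx
    have hp : (0:ℝ) < x ^ ((α+β-1)/2) := Real.rpow_pos_of_pos hx0 _
    have hlam : 0 < ε * x ^ ((α+β-1)/2) := by positivity
    have hb := key_est (α+β) hσ1 u u' hderiv hu'm hint hu0 _ hlam x ⟨hx0, hx1⟩
    have hxd : (0:ℝ) ≤ x ^ δ := Real.rpow_nonneg hx0.le δ
    have he : 0 ≤ δ + (1-(α+β))/2 := by linarith
    have hxe : x ^ (δ + (1-(α+β))/2) ≤ 1 := Real.rpow_le_one hx0.le hx1.le he
    have h2σ : (0:ℝ) < 2*(1-(α+β)) := by linarith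
    have hxprod : x ^ δ * x ^ ((α+β-1)/2) * x ^ (1-(α+β)) = x ^ (δ + (1-(α+β))/2) := by
      rw [← Real.rpow_add hx0, ← Real.rpow_add hx0]; congr 1; ring
    have hA := hAnonneg x hx0.le
    have t1 : x ^ δ * (ε * x ^ ((α+β-1)/2) * x ^ (1-(α+β)) / (2*(1-(α+β))))
        ≤ ε / (2*(1-(α+β))) := by
      rw [show x ^ δ * (ε * x ^ ((α+β-1)/2) * x ^ (1-(α+β)) / (2*(1-(α+β))))
          = ε * (x ^ δ * x ^ ((α+β-1)/2) * x ^ (1-(α+β))) / (2*(1-(α+β))) by ring, hxprod]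
      have hmul : ε * x ^ (δ + (1-(α+β))/2) ≤ ε := by
        have := mul_le_mul_of_nonneg_left hxe hε.le
        simpa using this
      exact div_le_div_of_nonneg_right hmul h2σ.le
    have t2 : x ^ δ * ((∫ t in Ioo (0:ℝ) x, t ^ (α+β) * u' t ^ 2)
          / (2*(ε * x ^ ((α+β-1)/2))))
        ≤ (∫ t in Ioo (0:ℝ) x, t ^ (α+β) * u' t ^ 2) / (2*ε) := by
      have hdiv : x ^ δ / x ^ ((α+β-1)/2) = x ^ (δ + (1-(α+β))/2) := by
        rw [← Real.rpow_sub hx0]; congr 1; ring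
      rw [show x ^ δ * ((∫ t in Ioo (0:ℝ) x, t ^ (α+β) * u' t ^ 2)
            / (2*(ε * x ^ ((α+β-1)/2))))
          = (∫ t in Ioo (0:ℝ) x, t ^ (α+β) * u' t ^ 2)
            * (x ^ δ / x ^ ((α+β-1)/2)) / (2*ε) by field_simp, hdiv]
      refine div_le_div_of_nonneg_right ?_ (by positivity)
      have := mul_le_mul_of_nonneg_left hxe hA
      simpa using this
    calc x ^ δ * |u x|
        ≤ x ^ δ * (ε * x ^ ((α+β-1)/2) * x ^ (1-(α+β)) / (2*(1-(α+β)))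
          + (∫ t in Ioo (0:ℝ) x, t ^ (α+β) * u' t ^ 2)
            / (2*(ε * x ^ ((α+β-1)/2)))) := mul_le_mul_of_nonneg_left hb hxd
      _ = x ^ δ * (ε * x ^ ((α+β-1)/2) * x ^ (1-(α+β)) / (2*(1-(α+β))))
          + x ^ δ * ((∫ t in Ioo (0:ℝ) x, t ^ (α+β) * u' t ^ 2)
            / (2*(ε * x ^ ((α+β-1)/2)))) := by ring
      _ ≤ ε / (2*(1-(α+β)))
          + (∫ t in Ioo (0:ℝ) x, t ^ (α+β) * u' t ^ 2) / (2*ε) := add_le_add t1 t2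
  -- the tail integral tends to 0 along a sequence
  have hanti : Antitone (fun n : ℕ => Ioo (0:ℝ) (1/(n+1))) := by
    intro m n hmn
    apply Ioo_subset_Ioo le_rfl
    apply one_div_le_one_div_of_le (by positivity)
    have : (m:ℝ) ≤ n := by exact_mod_cast hmn
    linarith
  have hInter : (⋂ n : ℕ, Ioo (0:ℝ) (1/(n+1))) = (∅ : Set ℝ) := by
    ext t
    simp only [mem_iInter, mem_Ioo, mem_empty_iff_false, iff_false, not_forall]
    by_contra hcon
    push_neg at hcon
    obtain ⟨n, hn⟩ := exists_nat_one_div_lt (hcon 0).1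
    exact absurd (hcon n).2 (not_lt.2 hn.le)
  have hseq := tendsto_setIntegral_of_antitone (μ := volume)
      (f := fun t : ℝ => t ^ (α+β) * u' t ^ 2)
      (fun n : ℕ => measurableSet_Ioo) hanti ⟨0, by norm_num; exact hint⟩
  rw [hInter] at hseq
  simp only [Measure.restrict_empty, integral_zero_measure] at hseq
  -- conclude
  rw [Metric.tendsto_nhdsWithin_nhds]
  intro ε' hε'
  have hεq : (0:ℝ) < (1-(α+β)) * ε' / 4 := by
    have : (0:ℝ) < 1 - (α+β) := by linarith
    positivity
  obtain ⟨n, hn⟩ := (hseq.eventually_lt_const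
    (show (0:ℝ) < ((1-(α+β)) * ε' / 4) * ε' by positivity)).exists
  refine ⟨min (1/(n+1)) 1, by positivity, ?_⟩
  intro x hx hdist
  have hx0 : (0:ℝ) < x := hx
  rw [Real.dist_eq, sub_zero, abs_of_pos hx0] at hdist
  have hxn : x < 1/(n+1) := hdist.trans_le (min_le_left _ _)
  have hx1 : x < 1 := hdist.trans_le (min_le_right _ _)
  have hmono : (∫ t in Ioo (0:ℝ) x, t ^ (α+β) * u' t ^ 2)
      ≤ ∫ t in Ioo (0:ℝ) (1/(n+1)), t ^ (α+β) * u' t ^ 2 := by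
    have hn1 : (0:ℝ) < 1/(n+1) := by positivity
    have hle : (1:ℝ)/(n+1) ≤ 1 := by
      rw [div_le_one (by positivity)]
      simp
    refine setIntegral_mono_set (hint.mono_set (Ioo_subset_Ioo le_rfl hle)) ?_
      (HasSubset.Subset.eventuallyLE (Ioo_subset_Ioo le_rfl hxn.le))
    exact (ae_restrict_iff' measurableSet_Ioo).2 (ae_of_all _ fun t ht =>
      mul_nonneg (Real.rpow_nonneg ht.1.le _) (sq_nonneg _))
  have hbound := key _ hεq x ⟨hx0, hx1⟩
  have hnn : 0 ≤ x ^ δ * |u x| :=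
    mul_nonneg (Real.rpow_nonneg hx0.le δ) (abs_nonneg _)
  rw [Real.dist_eq, sub_zero, abs_of_nonneg hnn]
  have hterm1 : ((1-(α+β)) * ε' / 4) / (2*(1-(α+β))) = ε' / 8 := by
    have h1σ : (1:ℝ) - (α+β) ≠ 0 := by linarith
    field_simp
    ring
  have hterm2 : (∫ t in Ioo (0:ℝ) x, t ^ (α+β) * u' t ^ 2) / (2*((1-(α+β)) * ε' / 4))
      < ε' / 2 := by
    rw [div_lt_iff₀ (by positivity)]
    calc (∫ t in Ioo (0:ℝ) x, t ^ (α+β) * u' t ^ 2)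
        ≤ ∫ t in Ioo (0:ℝ) (1/(n+1)), t ^ (α+β) * u' t ^ 2 := hmono
      _ < ((1-(α+β)) * ε' / 4) * ε' := hn
      _ = ε' / 2 * (2*((1-(α+β)) * ε' / 4)) := by ring
  calc x ^ δ * |u x|
      ≤ ((1-(α+β)) * ε' / 4) / (2*(1-(α+β)))
        + (∫ t in Ioo (0:ℝ) x, t ^ (α+β) * u' t ^ 2) / (2*((1-(α+β)) * ε' / 4)) := hbound
    _ < ε' / 8 + ε' / 2 := by rw [hterm1]; exact add_lt_add_right hterm2 _
    _ < ε' := by linarith
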